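/- arXiv:1401.6473 — 2 statements merged into one kernel-verified Lean document; each statement's English description precedes it below -/
import Mathlib

section
/- Let (η_i)_{i≥1} be a sequence in {0,...,N-1} and t_1⋯t_p a block with t_p < N-1 such that η_1⋯η_p = t_1⋯t_p^+, and for all n ≥ 0: η_{2^{n+1}p} = N − η_{2^n p} and η_{2^n p + k} = N−1−η_k for all 1 ≤ k < 2^n p. Then (η_i) equals the generalized Thue–Morse sequence generated by t_1⋯t_p^+, and conversely the generalized Thue–Morse sequence satisfies these recursions. -/
/-- Reflection of a block: each digit `c` becomes `N - 1 - c`. -/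
def reflB (N : ℕ) (w : List ℕ) : List ℕ := w.map (fun c => N - 1 - c)

/-- The block `w` with its last digit incremented by one. -/
def plusB (w : List ℕ) : List ℕ := w.dropLast ++ [w.getLast! + 1]

/-- The `i`-th cyclic rotation of the block `w` (0-indexed). -/
def rotB (w : List ℕ) (i : ℕ) : List ℕ := w.drop i ++ w.take i

/-- The lexicographic inequalities defining admissibility of a block. -/
def AdmissibleIneq (N : ℕ) (w : List ℕ) : Prop :=
  ∀ i < w.length,
    reflB N w ≤ rotB w i ∧ plusB (w.drop i) ++ reflB N (w.take i) ≤ plusB w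

/-- An admissible block in `{0, …, N-1}`. -/
def Admissible (N : ℕ) (w : List ℕ) : Prop :=
  w ≠ [] ∧ (∀ c ∈ w, c < N) ∧ w.getLast! < N - 1 ∧ AdmissibleIneq N w

/-- Prefixes of the generalized Thue–Morse sequence generated by `plusB w`:
`gtmBlock N w n` is the prefix `θ_1 ⋯ θ_{2^n p}`. -/
def gtmBlock (N : ℕ) (w : List ℕ) : ℕ → List ℕ
  | 0 => plusB w
  | n + 1 => gtmBlock N w n ++ plusB (reflB N (gtmBlock N w n))

/-- The generalized Thue–Morse sequence generated by `plusB w`, 0-indexed: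
`gtm N w n = θ_{n+1}`. -/
def gtm (N : ℕ) (w : List ℕ) : ℕ → ℕ := fun n => (gtmBlock N w n).getD n 0

/-- Strict lexicographic order on infinite sequences of digits. -/
def seqLt (a b : ℕ → ℕ) : Prop := ∃ n, (∀ k < n, a k = b k) ∧ a n < b n

/-- Lexicographic order on infinite sequences of digits. -/
def seqLe (a b : ℕ → ℕ) : Prop := seqLt a b ∨ a = b

/-- Shift of a sequence by `k` places. -/
def shift (a : ℕ → ℕ) (k : ℕ) : ℕ → ℕ := fun n => a (n + k)

/-- The periodic sequence `w^∞` obtained by repeating the block `w`. -/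
def per (w : List ℕ) : ℕ → ℕ := fun n => w.getD (n % w.length) 0

/-- Reflection of an infinite sequence. -/
def reflSeq (N : ℕ) (a : ℕ → ℕ) : ℕ → ℕ := fun n => N - 1 - a n

/-- The classical Thue–Morse sequence: parity of the binary digit sum. -/
def tm (i : ℕ) : ℕ := (Nat.digits 2 i).sum % 2

/-- Number of length-`n` words appearing in sequences of `Z`. -/
noncomputable def wordCount (Z : Set (ℕ → ℕ)) (n : ℕ) : ℕ :=
  Set.ncard { u : List ℕ | u.length = n ∧ ∃ d ∈ Z, ∀ k < n, u.getD k 0 = d k }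

/-- `Z` has topological entropy `h`. -/
def hasEntropy (Z : Set (ℕ → ℕ)) (h : ℝ) : Prop :=
  Filter.Tendsto (fun n : ℕ => Real.log (wordCount Z n) / n) Filter.atTop (nhds h)

theorem getLast!_eq_getD (l : List ℕ) (h : l ≠ []) : l.getLast! = l.getD (l.length - 1) 0 := by
  have h1 : l.length - 1 < l.length := by
    have := List.length_pos_iff.mpr h; omega
  rw [List.getLast!_eq_getElem!, List.getD_eq_getElem l 0 h1, getElem!_pos l _ h1]

theorem plusB_length (u : List ℕ) (h : u ≠ []) : (plusB u).length = u.length := by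
  have := List.length_pos_iff.mpr h
  simp [plusB]; omega

theorem plusB_getD_lt (u : List ℕ) (j : ℕ) (hj : j < u.length - 1) :
    (plusB u).getD j 0 = u.getD j 0 := by
  have h1 : j < u.dropLast.length := by simp; omega
  have h2 : j < u.length := by omega
  rw [plusB, List.getD_append _ _ _ _ h1, List.getD_eq_getElem _ 0 h1,
    List.getD_eq_getElem _ 0 h2, List.getElem_dropLast]

theorem plusB_getD_last (u : List ℕ) (h : u ≠ []) :
    (plusB u).getD (u.length - 1) 0 = u.getD (u.length - 1) 0 + 1 := by
  have := List.length_pos_iff.mpr h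
  have h1 : u.dropLast.length = u.length - 1 := by simp
  rw [plusB, List.getD_append_right _ _ _ _ (by omega), h1, Nat.sub_self]
  simp [getLast!_eq_getD u h, List.getLast?_eq_getElem?]

theorem reflB_length (N : ℕ) (u : List ℕ) : (reflB N u).length = u.length := by simp [reflB]

theorem reflB_getD (N : ℕ) (u : List ℕ) (j : ℕ) (hj : j < u.length) :
    (reflB N u).getD j 0 = N - 1 - u.getD j 0 := by
  have h1 : j < (reflB N u).length := by rw [reflB_length]; exact hj
  rw [List.getD_eq_getElem _ 0 h1, List.getD_eq_getElem _ 0 hj]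
  simp [reflB]

theorem gtmBlock_length (N : ℕ) (w : List ℕ) (hne : w ≠ []) (n : ℕ) :
    (gtmBlock N w n).length = 2 ^ n * w.length := by
  induction n with
  | zero => simp [gtmBlock, plusB_length w hne]
  | succ n ih =>
    have hpos : 0 < (gtmBlock N w n).length := by
      rw [ih]; have := List.length_pos_iff.mpr hne; positivity
    have hne2 : reflB N (gtmBlock N w n) ≠ [] := by
      intro h
      rw [← List.length_eq_zero_iff, reflB_length] at h
      omega
    rw [gtmBlock, List.length_append, ih, plusB_length _ hne2, reflB_length, ih,
      pow_succ]; ring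

theorem gtmBlock_ne_nil (N : ℕ) (w : List ℕ) (hne : w ≠ []) (n : ℕ) :
    gtmBlock N w n ≠ [] := by
  rw [← List.length_pos_iff, gtmBlock_length N w hne]
  have := List.length_pos_iff.mpr hne; positivity

theorem gtmBlock_agree (N : ℕ) (w : List ℕ) (hne : w ≠ []) :
    ∀ m n k, n ≤ m → k < 2 ^ n * w.length →
      (gtmBlock N w m).getD k 0 = (gtmBlock N w n).getD k 0 := by
  intro m
  induction m with
  | zero =>
    intro n k hn hk
    obtain rfl : n = 0 := by omega
    rfl
  | succ m ih =>
    intro n k hn hk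
    rcases Nat.eq_or_lt_of_le hn with h | h
    · rw [h]
    · have hnm : n ≤ m := by omega
      have hk2 : k < (gtmBlock N w m).length := by
        rw [gtmBlock_length N w hne]
        calc k < 2 ^ n * w.length := hk
          _ ≤ 2 ^ m * w.length := by
            apply Nat.mul_le_mul_right
            exact Nat.pow_le_pow_right (by norm_num) hnm
      rw [gtmBlock, List.getD_append _ _ _ _ hk2, ih n k hnm hk]

theorem gtm_eq (N : ℕ) (w : List ℕ) (hne : w ≠ []) (n k : ℕ) (hk : k < 2 ^ n * w.length) :
    gtm N w k = (gtmBlock N w n).getD k 0 := by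
  have hp := List.length_pos_iff.mpr hne
  have hk2 : k < 2 ^ k * w.length := by
    calc k < 2 ^ k := Nat.lt_two_pow_self
      _ = 2 ^ k * 1 := (mul_one _).symm
      _ ≤ 2 ^ k * w.length := Nat.mul_le_mul_left _ hp
  rw [gtm, ← gtmBlock_agree N w hne (max n k) k k le_sup_right hk2,
    gtmBlock_agree N w hne (max n k) n k le_sup_left hk]

theorem gtmBlock_bound (N : ℕ) (hN : 2 ≤ N) (w : List ℕ) (hne : w ≠ [])
    (hd : ∀ c ∈ w, c < N) (hlast : w.getLast! < N - 1) (n : ℕ) :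
    (∀ j < 2 ^ n * w.length, (gtmBlock N w n).getD j 0 < N) ∧
      1 ≤ (gtmBlock N w n).getD (2 ^ n * w.length - 1) 0 := by
  have hp := List.length_pos_iff.mpr hne
  induction n with
  | zero =>
    have hl : ∀ j < w.length - 1, (gtmBlock N w 0).getD j 0 < N := by
      intro j hj
      rw [gtmBlock, plusB_getD_lt w j hj]
      have hj2 : j < w.length := by omega
      rw [List.getD_eq_getElem w 0 hj2]
      exact hd _ (List.getElem_mem hj2)
    have hlst : (gtmBlock N w 0).getD (w.length - 1) 0 = w.getLast! + 1 := by
      rw [gtmBlock, plusB_getD_last w hne, ← getLast!_eq_getD w hne]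
    constructor
    · intro j hj
      simp only [pow_zero, one_mul] at hj
      rcases Nat.lt_or_ge j (w.length - 1) with h | h
      · exact hl j h
      · have : j = w.length - 1 := by omega
        rw [this, hlst]; omega
    · simp only [pow_zero, one_mul]
      rw [hlst]; omega
  | succ n ih =>
    have hlen : (gtmBlock N w n).length = 2 ^ n * w.length := gtmBlock_length N w hne n
    have hrlen : (reflB N (gtmBlock N w n)).length = 2 ^ n * w.length := by
      rw [reflB_length, hlen]
    have hrne : reflB N (gtmBlock N w n) ≠ [] := by
      rw [← List.length_pos_iff, hrlen]; positivity
    have hLpos : 0 < 2 ^ n * w.length := by positivity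
    have h2L : 2 ^ (n+1) * w.length = 2 * (2 ^ n * w.length) := by ring
    -- value at the tail
    have htail : ∀ j', j' < 2 ^ n * w.length →
        (gtmBlock N w (n+1)).getD (2 ^ n * w.length + j') 0
          = (plusB (reflB N (gtmBlock N w n))).getD j' 0 := by
      intro j' hj'
      rw [gtmBlock, List.getD_append_right _ _ _ _ (by omega), hlen]
      congr 1; omega
    have hmid : ∀ j', j' < 2 ^ n * w.length - 1 →
        (plusB (reflB N (gtmBlock N w n))).getD j' 0
          = N - 1 - (gtmBlock N w n).getD j' 0 := by
      intro j' hj'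
      rw [plusB_getD_lt _ j' (by rw [hrlen]; omega), reflB_getD N _ j' (by omega)]
    have hend : (plusB (reflB N (gtmBlock N w n))).getD (2 ^ n * w.length - 1) 0
        = N - (gtmBlock N w n).getD (2 ^ n * w.length - 1) 0 := by
      have := plusB_getD_last _ hrne
      rw [hrlen] at this
      rw [this, reflB_getD N _ _ (by omega)]
      have h1 := ih.1 (2 ^ n * w.length - 1) (by omega)
      have h2 := ih.2
      omega
    constructor
    · intro j hj
      rcases Nat.lt_or_ge j (2 ^ n * w.length) with h | h
      · rw [gtmBlock, List.getD_append _ _ _ _ (by omega)]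
        exact ih.1 j h
      · obtain ⟨j', rfl⟩ : ∃ j', j = 2 ^ n * w.length + j' := ⟨j - 2 ^ n * w.length, by omega⟩
        have hj' : j' < 2 ^ n * w.length := by omega
        rw [htail j' hj']
        rcases Nat.lt_or_ge j' (2 ^ n * w.length - 1) with h' | h'
        · rw [hmid j' h']; omega
        · have : j' = 2 ^ n * w.length - 1 := by omega
          rw [this, hend]
          have := ih.2; omega
    · have hidx : 2 ^ (n+1) * w.length - 1 = 2 ^ n * w.length + (2 ^ n * w.length - 1) := by
        omega
      rw [hidx, htail _ (by omega), hend]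
      have h1 := ih.1 (2 ^ n * w.length - 1) (by omega)
      omega

theorem gtm_init (N : ℕ) (w : List ℕ) (hne : w ≠ []) :
    ∀ k < w.length, gtm N w k = (plusB w).getD k 0 := by
  intro k hk
  rw [gtm_eq N w hne 0 k (by simpa using hk)]
  rfl

theorem gtm_refl (N : ℕ) (w : List ℕ) (hne : w ≠ []) :
    ∀ n : ℕ, ∀ k, 1 ≤ k → k < 2 ^ n * w.length →
      gtm N w (2 ^ n * w.length + k - 1) = N - 1 - gtm N w (k - 1) := by
  intro n k hk1 hk2
  have hp := List.length_pos_iff.mpr hne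
  have hlen : (gtmBlock N w n).length = 2 ^ n * w.length := gtmBlock_length N w hne n
  have hrlen : (reflB N (gtmBlock N w n)).length = 2 ^ n * w.length := by
    rw [reflB_length, hlen]
  have hidx : 2 ^ n * w.length + k - 1 = 2 ^ n * w.length + (k - 1) := by omega
  have h2L : 2 ^ (n+1) * w.length = 2 * (2 ^ n * w.length) := by ring
  have hlt : 2 ^ n * w.length + (k - 1) < 2 ^ (n+1) * w.length := by omega
  rw [hidx, gtm_eq N w hne (n+1) _ hlt, gtmBlock,
    List.getD_append_right _ _ _ _ (by omega), hlen, Nat.add_sub_cancel_left,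
    plusB_getD_lt _ (k-1) (by rw [hrlen]; omega), reflB_getD N _ (k-1) (by omega),
    ← gtm_eq N w hne n (k-1) (by omega)]

theorem gtm_double (N : ℕ) (hN : 2 ≤ N) (w : List ℕ) (hne : w ≠ [])
    (hd : ∀ c ∈ w, c < N) (hlast : w.getLast! < N - 1) :
    ∀ n : ℕ, gtm N w (2 ^ (n+1) * w.length - 1) = N - gtm N w (2 ^ n * w.length - 1) := by
  intro n
  have hp := List.length_pos_iff.mpr hne
  have hLpos : 0 < 2 ^ n * w.length := by positivity
  have hlen : (gtmBlock N w n).length = 2 ^ n * w.length := gtmBlock_length N w hne n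
  have hrlen : (reflB N (gtmBlock N w n)).length = 2 ^ n * w.length := by
    rw [reflB_length, hlen]
  have hrne : reflB N (gtmBlock N w n) ≠ [] := by
    rw [← List.length_pos_iff, hrlen]; exact hLpos
  have h2L : 2 ^ (n+1) * w.length = 2 * (2 ^ n * w.length) := by ring
  have hidx : 2 ^ (n+1) * w.length - 1 = 2 ^ n * w.length + (2 ^ n * w.length - 1) := by omega
  have hlt : 2 ^ n * w.length + (2 ^ n * w.length - 1) < 2 ^ (n+1) * w.length := by omega
  have hplast := plusB_getD_last _ hrne
  rw [hrlen] at hplast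
  have hb := gtmBlock_bound N hN w hne hd hlast n
  have h1 := hb.1 (2 ^ n * w.length - 1) (by omega)
  rw [hidx, gtm_eq N w hne (n+1) _ hlt, gtmBlock,
    List.getD_append_right _ _ _ _ (by omega), hlen, Nat.add_sub_cancel_left,
    hplast, reflB_getD N _ _ (by omega),
    ← gtm_eq N w hne n _ (by omega)]
  rw [← gtm_eq N w hne n _ (by omega)] at h1
  omega

theorem exists_pow_interval (p i : ℕ) (hp : 0 < p) (hpi : p ≤ i) :
    ∃ n, 2 ^ n * p ≤ i ∧ i < 2 ^ (n + 1) * p := by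
  refine ⟨Nat.log 2 (i / p), ?_, ?_⟩
  · calc 2 ^ Nat.log 2 (i / p) * p ≤ (i / p) * p := by
          apply Nat.mul_le_mul_right
          exact Nat.pow_log_le_self 2 (by
            have : 1 ≤ i / p := (Nat.one_le_div_iff hp).mpr hpi
            omega)
      _ ≤ i := Nat.div_mul_le_self i p
  · have h1 : i / p < 2 ^ (Nat.log 2 (i / p) + 1) := Nat.lt_pow_succ_log_self (by norm_num) _
    have h2 : i < (i / p + 1) * p := by
      have := Nat.div_add_mod i p
      have := Nat.mod_lt i hp
      nlinarith
    calc i < (i / p + 1) * p := h2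
      _ ≤ 2 ^ (Nat.log 2 (i / p) + 1) * p := Nat.mul_le_mul_right p h1

theorem stmt5' (N : ℕ) (hN : 2 ≤ N) (w : List ℕ) (hne : w ≠ [])
    (hd : ∀ c ∈ w, c < N) (hlast : w.getLast! < N - 1)
    (η : ℕ → ℕ)
    (hinit : ∀ k < w.length, η k = (plusB w).getD k 0)
    (hdouble : ∀ n : ℕ, η (2 ^ (n + 1) * w.length - 1) = N - η (2 ^ n * w.length - 1))
    (hrefl : ∀ n : ℕ, ∀ k, 1 ≤ k → k < 2 ^ n * w.length →
      η (2 ^ n * w.length + k - 1) = N - 1 - η (k - 1)) :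
    η = gtm N w ∧
    (∀ k < w.length, gtm N w k = (plusB w).getD k 0) ∧
    (∀ n : ℕ, gtm N w (2 ^ (n + 1) * w.length - 1) = N - gtm N w (2 ^ n * w.length - 1)) ∧
    (∀ n : ℕ, ∀ k, 1 ≤ k → k < 2 ^ n * w.length →
      gtm N w (2 ^ n * w.length + k - 1) = N - 1 - gtm N w (k - 1)) := by
  have hp := List.length_pos_iff.mpr hne
  refine ⟨?_, gtm_init N w hne, gtm_double N hN w hne hd hlast, gtm_refl N w hne⟩
  funext i
  induction i using Nat.strong_induction_on with
  | _ i ih =>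
    rcases Nat.lt_or_ge i w.length with h | h
    · rw [hinit i h, gtm_init N w hne i h]
    · obtain ⟨n, h1, h2⟩ := exists_pow_interval w.length i hp h
      have h2L : 2 ^ (n + 1) * w.length = 2 * (2 ^ n * w.length) := by ring
      have hLpos : 0 < 2 ^ n * w.length := by positivity
      set L := 2 ^ n * w.length with hL
      set k := i - L + 1 with hk
      have hk1 : 1 ≤ k := by omega
      have hkL : k ≤ L := by omega
      have hik : i = L + k - 1 := by omega
      rcases Nat.lt_or_ge k L with hlt | hge
      · have hklt : k - 1 < i := by omega
        rw [hik, hrefl n k hk1 hlt, gtm_refl N w hne n k hk1 hlt, ih (k-1) hklt]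
      · have hkeq : k = L := by omega
        have hik2 : i = 2 ^ (n + 1) * w.length - 1 := by omega
        have hlt2 : L - 1 < i := by omega
        rw [hik2, hdouble n, gtm_double N hN w hne hd hlast n, ← hL, ih (L-1) hlt2]

/-- characterization of the generalized Thue–Morse sequence by the
recursions `η_{2^{n+1}p} = N - η_{2^n p}` and `η_{2^n p + k} = N-1-η_k` for
`1 ≤ k < 2^n p` (sequences are 0-indexed, so `η_ℓ` is `η (ℓ-1)`). -/
theorem stmt5 (N : ℕ) (hN : 2 ≤ N) (w : List ℕ) (hne : w ≠ [])
    (hd : ∀ c ∈ w, c < N) (hlast : w.getLast! < N - 1)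
    (η : ℕ → ℕ)
    (hinit : ∀ k < w.length, η k = (plusB w).getD k 0)
    (hdouble : ∀ n : ℕ, η (2 ^ (n + 1) * w.length - 1) = N - η (2 ^ n * w.length - 1))
    (hrefl : ∀ n : ℕ, ∀ k, 1 ≤ k → k < 2 ^ n * w.length →
      η (2 ^ n * w.length + k - 1) = N - 1 - η (k - 1)) :
    η = gtm N w ∧
    (∀ k < w.length, gtm N w k = (plusB w).getD k 0) ∧
    (∀ n : ℕ, gtm N w (2 ^ (n + 1) * w.length - 1) = N - gtm N w (2 ^ n * w.length - 1)) ∧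
    (∀ n : ℕ, ∀ k, 1 ≤ k → k < 2 ^ n * w.length →
      gtm N w (2 ^ n * w.length + k - 1) = N - 1 - gtm N w (k - 1)) :=
  stmt5' N hN w hne hd hlast η hinit hdouble hrefl
end

section
/- Let N ≥ 2 and let s_1⋯s_q and t_1⋯t_p be admissible blocks with q ≥ p. If (s_1⋯s_q)^∞ > (t_1⋯t_p)^∞ lexicographically, then s_1⋯s_p > t_1⋯t_p as length-p blocks (i.e., the first p digits of s already strictly exceed t_1⋯t_p). -/
lemma lexAux : ∀ (a b : List ℕ), List.Lex (·<·) a b → a.length = b.length →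
    ∃ u < a.length, (∀ i < u, a.getD i 0 = b.getD i 0) ∧ a.getD u 0 < b.getD u 0 := by
  intro a b h
  induction h with
  | nil => intro hl; simp at hl
  | rel h => intro _; exact ⟨0, by simp, by simp, by simpa using h⟩
  | cons h ih =>
    intro hl
    obtain ⟨u, hu, hag, hst⟩ := ih (by simpa using hl)
    refine ⟨u+1, by simpa using hu, ?_, by simpa using hst⟩
    intro i hi
    cases i with
    | zero => simp
    | succ i => simpa using hag i (by omega)

lemma ltOfGetD : ∀ (a b : List ℕ) (n : ℕ), n < a.length → n < b.length →
    (∀ i < n, a.getD i 0 = b.getD i 0) → a.getD n 0 < b.getD n 0 → a < b := by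
  intro a b n
  induction n generalizing a b with
  | zero =>
    intro ha hb _ hst
    match a, b with
    | x :: a, y :: b => exact List.Lex.rel (by simpa using hst)
  | succ n ih =>
    intro ha hb hag hst
    match a, b with
    | x :: a, y :: b =>
      have hx : x = y := by simpa using hag 0 (by omega)
      subst hx
      exact List.Lex.cons (ih a b (by simpa using ha) (by simpa using hb)
        (fun i hi => by simpa using hag (i+1) (by omega)) (by simpa using hst))

lemma getLast!_eq_getD_s11 (w : List ℕ) (hw : w ≠ []) : w.getLast! = w.getD (w.length - 1) 0 := by
  have hp := List.length_pos_iff.mpr hw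
  rw [List.getLast!_of_getLast? (List.getLast?_eq_getLast hw), List.getLast_eq_getElem,
    List.getD_eq_getElem _ _ (by omega)]

lemma plusB_length_s11 (w : List ℕ) (hw : w ≠ []) : (plusB w).length = w.length := by
  have := List.length_pos_iff.mpr hw
  simp [plusB]
  omega

lemma plusB_getD_lt_s11 (w : List ℕ) (v : ℕ) (hv : v < w.length - 1) :
    (plusB w).getD v 0 = w.getD v 0 := by
  have h1 : v < w.dropLast.length := by simp; omega
  rw [plusB, List.getD_append _ _ _ _ h1, List.getD_eq_getElem _ _ h1,
    List.getElem_dropLast, List.getD_eq_getElem _ _ (by simp at h1 ⊢; omega)]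

lemma plusB_getD_last_s11 (w : List ℕ) (hw : w ≠ []) :
    (plusB w).getD (w.length - 1) 0 = w.getD (w.length - 1) 0 + 1 := by
  have hp := List.length_pos_iff.mpr hw
  have h1 : w.dropLast.length ≤ w.length - 1 := by simp
  rw [plusB, List.getD_append_right _ _ _ _ h1]
  have h2 : w.length - 1 - w.dropLast.length = 0 := by simp
  rw [h2, getLast!_eq_getD_s11 w hw]
  simp

/-- Key consequence of admissibility: every nontrivial cyclic shift of `s^∞`
is strictly smaller than `s^∞`, with witness inside the first period. -/
lemma shiftLt (N : ℕ) (s : List ℕ) (hs : Admissible N s) (j : ℕ) (hj0 : 0 < j)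
    (hj : j < s.length) :
    ∃ k, j + k < s.length ∧ (∀ i < k, s.getD (j+i) 0 = s.getD i 0) ∧
      s.getD (j+k) 0 < s.getD k 0 := by
  obtain ⟨hne, -, -, hineq⟩ := hs
  set q := s.length with hqdef
  have hq : 0 < q := List.length_pos_iff.mpr hne
  have h2 := (hineq j hj).2
  set L : List ℕ := plusB (s.drop j) ++ reflB N (s.take j) with hL
  have hdlen : (s.drop j).length = q - j := by simp [hqdef]
  have hdne : s.drop j ≠ [] := by
    intro hc; rw [← List.length_eq_zero_iff, hdlen] at hc; omega
  have hplen : (plusB (s.drop j)).length = q - j := by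
    rw [plusB_length_s11 _ hdne, hdlen]
  have hLlen : L.length = q := by
    simp [hL, hplen, reflB]
    omega
  have hRlen : (plusB s).length = q := plusB_length_s11 s hne
  have dropD : ∀ v, j + v < q → (s.drop j).getD v 0 = s.getD (j+v) 0 := by
    intro v hv
    rw [List.getD_eq_getElem _ _ (by omega : v < (s.drop j).length),
      List.getElem_drop, List.getD_eq_getElem _ _ (by omega)]
  have Lval : ∀ v < q - j - 1, L.getD v 0 = s.getD (j+v) 0 := by
    intro v hv
    rw [hL, List.getD_append _ _ _ _ (by omega), plusB_getD_lt_s11 _ _ (by omega),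
      dropD v (by omega)]
  have Llast : L.getD (q-j-1) 0 = s.getD (q-1) 0 + 1 := by
    rw [hL, List.getD_append _ _ _ _ (by omega)]
    have := plusB_getD_last_s11 (s.drop j) hdne
    rw [hdlen] at this
    rw [this, dropD _ (by omega)]
    congr 2 <;> omega
  have Rval : ∀ v < q - 1, (plusB s).getD v 0 = s.getD v 0 := fun v hv =>
    plusB_getD_lt_s11 s v hv
  -- the "last position" conclusion
  have lastCase : (∀ i < q - j - 1, s.getD (j+i) 0 = s.getD i 0) →
      s.getD (q-1) 0 + 1 ≤ s.getD (q-j-1) 0 →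
      ∃ k, j + k < q ∧ (∀ i < k, s.getD (j+i) 0 = s.getD i 0) ∧
        s.getD (j+k) 0 < s.getD k 0 := by
    intro hag hle
    refine ⟨q - j - 1, by omega, hag, ?_⟩
    have : j + (q - j - 1) = q - 1 := by omega
    rw [this]; omega
  rcases lt_or_eq_of_le h2 with hlt | heq
  · obtain ⟨u, hu, hag, hst⟩ := lexAux _ _ hlt (by rw [hLlen, hRlen])
    rw [hLlen] at hu
    by_cases hu1 : u < q - j - 1
    · refine ⟨u, by omega, ?_, ?_⟩
      · intro i hi
        have := hag i hi
        rwa [Lval i (by omega), Rval i (by omega)] at this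
      · have := hst
        rwa [Lval u hu1, Rval u (by omega)] at this
    · apply lastCase
      · intro i hi
        have := hag i (by omega)
        rwa [Lval i hi, Rval i (by omega)] at this
      · rcases eq_or_lt_of_le (le_of_not_gt hu1) with he | hlt2
        · have := hst
          rw [← he, Llast, Rval _ (by omega)] at this
          omega
        · have := hag (q-j-1) hlt2
          rw [Llast, Rval _ (by omega)] at this
          omega
  · apply lastCase
    · intro i hi
      have : L.getD i 0 = (plusB s).getD i 0 := by rw [heq]
      rwa [Lval i hi, Rval i (by omega)] at this
    · have : L.getD (q-j-1) 0 = (plusB s).getD (q-j-1) 0 := by rw [heq]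
      rw [Llast, Rval _ (by omega)] at this
      omega

/-- from the proof of Lemma 5.9 — for admissible blocks `s` and `t`
with `|s| ≥ |t|`, if `s^∞ > t^∞` then already `s_1⋯s_p > t_1⋯t_p`. -/
theorem stmt11 (N : ℕ) (hN : 2 ≤ N) (s t : List ℕ)
    (hs : Admissible N s) (ht : Admissible N t) (hlen : t.length ≤ s.length)
    (h : seqLt (per t) (per s)) :
    t < s.take t.length := by
  have hp : 0 < t.length := List.length_pos_iff.mpr ht.1
  have hq : 0 < s.length := List.length_pos_iff.mpr hs.1
  obtain ⟨n₀, hagr0, hlt0⟩ := h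
  have hex : ∃ n, per t n ≠ per s n := ⟨n₀, Nat.ne_of_lt hlt0⟩
  set n := Nat.find hex with hndef
  have hag : ∀ k < n, per t k = per s k := fun k hk => not_not.mp (Nat.find_min hex hk)
  have hlt : per t n < per s n := by
    have h1 : n ≤ n₀ := Nat.find_min' hex (Nat.ne_of_lt hlt0)
    rcases lt_or_eq_of_le h1 with h2 | h2
    · exact absurd (hagr0 n h2) (Nat.find_spec hex)
    · rw [h2]; exact hlt0
  have perD : ∀ x, x < s.length → per s x = s.getD x 0 := fun x hx => by
    show s.getD (x % s.length) 0 = _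
    rw [Nat.mod_eq_of_lt hx]
  have perDt : ∀ x, x < t.length → per t x = t.getD x 0 := fun x hx => by
    show t.getD (x % t.length) 0 = _
    rw [Nat.mod_eq_of_lt hx]
  -- the key claim: the first disagreement is within the first period of t
  have hnp : n < t.length := by
    by_contra hge
    push_neg at hge
    set r := n % t.length with hrdef
    set m := n - r with hmdef
    have hr : r < t.length := Nat.mod_lt _ hp
    have hmr : m + r = n := by omega
    have hm0 : 0 < m := by omega
    have hmd : m = t.length * (n / t.length) := by
      have := Nat.div_add_mod n t.length
      omega
    have perT : ∀ i, per t (m + i) = per t i := by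
      intro i
      show t.getD ((m + i) % t.length) 0 = t.getD (i % t.length) 0
      rw [hmd, Nat.mul_add_mod]
    set j := m % s.length with hjdef
    have perSshift : ∀ i, per s (m + i) = per s (j + i) := by
      intro i
      show s.getD ((m + i) % s.length) 0 = s.getD ((j + i) % s.length) 0
      congr 1
      rw [Nat.add_mod m i, Nat.add_mod j i, hjdef,
        Nat.mod_mod_of_dvd m (dvd_refl s.length)]
    have key2 : ∀ i < r, per s (m + i) = per s i := by
      intro i hi
      have h1 : per t (m + i) = per s (m + i) := hag _ (by omega)
      have h3 : per t i = per s i := hag i (by omega)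
      rw [← h1, perT i, h3]
    have key3 : per s r < per s (m + r) := by
      have h3 : per t r = per s r := hag r (by omega)
      have h4 : per t (m + r) = per t r := perT r
      rw [hmr] at h4 ⊢
      omega
    by_cases hj0 : j = 0
    · have h5 := perSshift r
      rw [hj0, zero_add] at h5
      omega
    · have hjq : j < s.length := Nat.mod_lt _ hq
      obtain ⟨k, hk, hag2, hst2⟩ := shiftLt N s hs j (Nat.pos_of_ne_zero hj0) hjq
      have hag2' : ∀ i < k, per s (j + i) = per s i := fun i hi => by
        rw [perD (j+i) (by omega), perD i (by omega)]
        exact hag2 i hi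
      have hst2' : per s (j + k) < per s k := by
        rw [perD (j+k) hk, perD k (by omega)]
        exact hst2
      rcases lt_trichotomy k r with hkr | hkr | hkr
      · have h1 := key2 k hkr
        rw [perSshift k] at h1
        omega
      · have h5 := perSshift r
        rw [hkr] at hst2'
        omega
      · have h6 := hag2' r hkr
        have h5 := perSshift r
        omega
  -- transfer to lists
  have takeD : ∀ i, i < t.length → (s.take t.length).getD i 0 = s.getD i 0 := by
    intro i hi
    rw [List.getD_eq_getElem _ _ (by simp [List.length_take]; omega),
      List.getD_eq_getElem _ _ (by omega)]
    exact List.getElem_take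
  apply ltOfGetD t (s.take t.length) n hnp (by simp [List.length_take]; omega)
  · intro i hi
    rw [takeD i (by omega), ← perDt i (by omega), ← perD i (by omega)]
    exact hag i hi
  · rw [takeD n hnp, ← perDt n hnp, ← perD n (by omega)]
    exact hlt
end
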